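/- Let (X, T) be a topological dynamical system with natural extension (X̃_T, T̃). Then mdim(X, T) ≥ mdim(X̃_T, T̃). -/

import Mathlib

open scoped ENNReal Classical

section MeanDimDefs

variable {X : Type*}

/-- A finite open cover of `X`. -/
def IsFinOpenCover [TopologicalSpace X] (α : Finset (Set X)) : Prop :=
  (∀ A ∈ α, IsOpen A) ∧ ⋃₀ (α : Set (Set X)) = Set.univ

/-- `β` refines `α`: every element of `β` is contained in some element of `α`. -/
def Refines (β α : Finset (Set X)) : Prop :=
  ∀ B ∈ β, ∃ A ∈ α, B ⊆ A

/-- The order of a finite cover: `sup_x (Σ_A 1_A(x)) - 1`. -/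
noncomputable def ordCover (α : Finset (Set X)) : ℕ :=
  (⨆ x : X, (α.filter fun A => x ∈ A).card) - 1

/-- `D(α)`: the minimal order of a finite open cover refining `α`. -/
noncomputable def Dcover [TopologicalSpace X] (α : Finset (Set X)) : ℕ :=
  sInf {n | ∃ β : Finset (Set X), IsFinOpenCover β ∧ Refines β α ∧ ordCover β = n}

/-- The joint `α ∨ β = {U ∩ V : U ∈ α, V ∈ β}`. -/
noncomputable def jointCover (α β : Finset (Set X)) : Finset (Set X) :=
  (α ×ˢ β).image fun p => p.1 ∩ p.2

/-- The preimage cover `T⁻¹ α`. -/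
noncomputable def preimCover (T : X → X) (α : Finset (Set X)) : Finset (Set X) :=
  α.image fun A => T ⁻¹' A

/-- `dynCover T α n = ⋁_{i=0}^{n} T^{-i} α`. -/
noncomputable def dynCover (T : X → X) (α : Finset (Set X)) : ℕ → Finset (Set X)
  | 0 => α
  | n + 1 => jointCover α (preimCover T (dynCover T α n))

/-- Mean dimension relative to a cover:
`mdim(X,T,α) = lim_n D(⋁_{i=0}^{n-1} T^{-i}α)/n = inf_n D(⋁_{i=0}^{n-1} T^{-i}α)/n`. -/
noncomputable def mdimCover [TopologicalSpace X] (T : X → X) (α : Finset (Set X)) : ℝ≥0∞ :=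
  ⨅ n : ℕ, (Dcover (dynCover T α n) : ℝ≥0∞) / (n + 1)

/-- Mean topological dimension. -/
noncomputable def mdim (X : Type*) [TopologicalSpace X] (T : X → X) : ℝ≥0∞ :=
  ⨆ (α : Finset (Set X)) (_ : IsFinOpenCover α), mdimCover T α

/-- Topological (covering) dimension, `dim X = sup_α D(α)`. -/
noncomputable def covDim (X : Type*) [TopologicalSpace X] : ℝ≥0∞ :=
  ⨆ (α : Finset (Set X)) (_ : IsFinOpenCover α), (Dcover α : ℝ≥0∞)

/-- Stable topological dimension `stabdim X = lim_n dim(X^n)/n = inf_n dim(X^n)/n`. -/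
noncomputable def stabdim (X : Type*) [TopologicalSpace X] : ℝ≥0∞ :=
  ⨅ n : ℕ, covDim (Fin (n + 1) → X) / ((n : ℝ≥0∞) + 1)

end MeanDimDefs
section NatExtDefs

variable {X : Type*}

/-- The natural extension space `X̃_T ⊆ X^ℕ`. -/
def natExtSet (T : X → X) : Set (ℕ → X) := {x | ∀ k, T (x (k + 1)) = x k}

/-- The natural extension map `T̃ : (x_k)_k ↦ (T x_0, x_0, x_1, …)`. -/
def natExtMap (T : X → X) : ↥(natExtSet T) → ↥(natExtSet T) := fun x =>
  ⟨fun k => Nat.rec (T (x.1 0)) (fun k _ => x.1 k) k, by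
    intro k
    cases k with
    | zero => rfl
    | succ k => exact x.2 k⟩

end NatExtDefs

section AuxLemmas

variable {X Y : Type*}

lemma refines_refl (α : Finset (Set X)) : Refines α α := fun B hB => ⟨B, hB, subset_rfl⟩

lemma refines_trans {γ β α : Finset (Set X)} (h1 : Refines γ β) (h2 : Refines β α) :
    Refines γ α := fun C hC => by
  obtain ⟨B, hB, hCB⟩ := h1 C hC
  obtain ⟨A, hA, hBA⟩ := h2 B hB
  exact ⟨A, hA, hCB.trans hBA⟩

lemma Dcover_le_ord [TopologicalSpace X] {α β : Finset (Set X)} (hβ : IsFinOpenCover β)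
    (hr : Refines β α) : Dcover α ≤ ordCover β :=
  Nat.sInf_le ⟨β, hβ, hr, rfl⟩

lemma Dcover_mono [TopologicalSpace X] {γ α : Finset (Set X)} (hγ : IsFinOpenCover γ)
    (h : Refines γ α) : Dcover α ≤ Dcover γ := by
  obtain ⟨β, hβ, hrefβ, hord⟩ := Nat.sInf_mem
    (⟨ordCover γ, γ, hγ, refines_refl γ, rfl⟩ : Set.Nonempty
      {n | ∃ β : Finset (Set X), IsFinOpenCover β ∧ Refines β γ ∧ ordCover β = n})
  calc Dcover α ≤ ordCover β := Dcover_le_ord hβ (refines_trans hrefβ h)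
    _ = Dcover γ := hord

lemma isFinOpenCover_joint [TopologicalSpace X] {α β : Finset (Set X)}
    (hα : IsFinOpenCover α) (hβ : IsFinOpenCover β) : IsFinOpenCover (jointCover α β) := by
  constructor
  · intro C hC
    simp only [jointCover, Finset.mem_image, Finset.mem_product] at hC
    obtain ⟨⟨A, B⟩, ⟨hA, hB⟩, rfl⟩ := hC
    exact (hα.1 A hA).inter (hβ.1 B hB)
  · ext x
    simp only [Set.mem_sUnion, Set.mem_univ, iff_true, Finset.mem_coe]
    have hx1 : x ∈ ⋃₀ (α : Set (Set X)) := hα.2 ▸ trivial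
    have hx2 : x ∈ ⋃₀ (β : Set (Set X)) := hβ.2 ▸ trivial
    obtain ⟨A, hA, hxA⟩ := hx1
    obtain ⟨B, hB, hxB⟩ := hx2
    refine ⟨A ∩ B, ?_, hxA, hxB⟩
    simp only [jointCover, Finset.mem_image, Finset.mem_product]
    exact ⟨(A, B), ⟨hA, hB⟩, rfl⟩

lemma refines_joint {γ₁ γ₂ α₁ α₂ : Finset (Set X)} (h1 : Refines γ₁ α₁)
    (h2 : Refines γ₂ α₂) : Refines (jointCover γ₁ γ₂) (jointCover α₁ α₂) := by
  intro C hC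
  simp only [jointCover, Finset.mem_image, Finset.mem_product] at hC
  obtain ⟨⟨B1, B2⟩, ⟨hB1, hB2⟩, rfl⟩ := hC
  obtain ⟨A1, hA1, hs1⟩ := h1 B1 hB1
  obtain ⟨A2, hA2, hs2⟩ := h2 B2 hB2
  refine ⟨A1 ∩ A2, ?_, Set.inter_subset_inter hs1 hs2⟩
  simp only [jointCover, Finset.mem_image, Finset.mem_product]
  exact ⟨(A1, A2), ⟨hA1, hA2⟩, rfl⟩

/-- Pullback of a cover along a map. -/
noncomputable def pbCover (π : Y → X) (α : Finset (Set X)) : Finset (Set Y) :=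
  α.image fun A => π ⁻¹' A

lemma preimCover_eq_pb (T : X → X) (α : Finset (Set X)) : preimCover T α = pbCover T α := rfl

lemma isFinOpenCover_pb [TopologicalSpace X] [TopologicalSpace Y] {π : Y → X}
    (hπ : Continuous π) {β : Finset (Set X)} (hβ : IsFinOpenCover β) :
    IsFinOpenCover (pbCover π β) := by
  constructor
  · intro B hB
    simp only [pbCover, Finset.mem_image] at hB
    obtain ⟨A, hA, rfl⟩ := hB
    exact (hβ.1 A hA).preimage hπ
  · ext y
    simp only [Set.mem_sUnion, Set.mem_univ, iff_true, Finset.mem_coe]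
    have : π y ∈ ⋃₀ (β : Set (Set X)) := hβ.2 ▸ trivial
    obtain ⟨A, hA, hy⟩ := this
    refine ⟨π ⁻¹' A, ?_, hy⟩
    simp only [pbCover, Finset.mem_image]
    exact ⟨A, hA, rfl⟩

lemma refines_pb {π : Y → X} {β' β : Finset (Set X)} (h : Refines β' β) :
    Refines (pbCover π β') (pbCover π β) := by
  intro B hB
  simp only [pbCover, Finset.mem_image] at hB
  obtain ⟨A, hA, rfl⟩ := hB
  obtain ⟨A', hA', hs⟩ := h A hA
  refine ⟨π ⁻¹' A', ?_, Set.preimage_mono hs⟩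
  simp only [pbCover, Finset.mem_image]
  exact ⟨A', hA', rfl⟩

lemma pb_joint (π : Y → X) (α β : Finset (Set X)) :
    pbCover π (jointCover α β) = jointCover (pbCover π α) (pbCover π β) := by
  ext C
  simp only [pbCover, jointCover, Finset.mem_image, Finset.mem_product, Prod.exists]
  constructor
  · rintro ⟨S, ⟨A, B, ⟨hA, hB⟩, rfl⟩, rfl⟩
    exact ⟨π ⁻¹' A, π ⁻¹' B, ⟨⟨A, hA, rfl⟩, ⟨B, hB, rfl⟩⟩, (Set.preimage_inter).symm⟩
  · rintro ⟨A', B', ⟨⟨A, hA, rfl⟩, ⟨B, hB, rfl⟩⟩, rfl⟩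
    exact ⟨A ∩ B, ⟨A, B, ⟨hA, hB⟩, rfl⟩, Set.preimage_inter⟩

lemma pb_preim {π : Y → X} {S : Y → Y} {T : X → X} (hsc : ∀ y, π (S y) = T (π y))
    (α : Finset (Set X)) : pbCover π (preimCover T α) = preimCover S (pbCover π α) := by
  have hset : ∀ A : Set X, π ⁻¹' (T ⁻¹' A) = S ⁻¹' (π ⁻¹' A) := by
    intro A; ext y; simp [Set.mem_preimage, hsc y]
  simp only [pbCover, preimCover, Finset.image_image]
  apply Finset.image_congr
  intro A _
  simp only [Function.comp]
  exact hset A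

lemma pb_dyn {π : Y → X} {S : Y → Y} {T : X → X} (hsc : ∀ y, π (S y) = T (π y))
    (α : Finset (Set X)) (n : ℕ) :
    pbCover π (dynCover T α n) = dynCover S (pbCover π α) n := by
  induction n with
  | zero => rfl
  | succ n ih => rw [dynCover, dynCover, pb_joint, pb_preim hsc, ih]

lemma isFinOpenCover_dyn [TopologicalSpace X] {T : X → X} (hT : Continuous T)
    {α : Finset (Set X)} (hα : IsFinOpenCover α) (n : ℕ) :
    IsFinOpenCover (dynCover T α n) := by
  induction n with
  | zero => exact hα
  | succ n ih =>
    rw [dynCover, preimCover_eq_pb]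
    exact isFinOpenCover_joint hα (isFinOpenCover_pb hT ih)

lemma refines_dyn {T : X → X} {γ α : Finset (Set X)} (h : Refines γ α) (n : ℕ) :
    Refines (dynCover T γ n) (dynCover T α n) := by
  induction n with
  | zero => exact h
  | succ n ih =>
    rw [dynCover, dynCover, preimCover_eq_pb, preimCover_eq_pb]
    exact refines_joint h (refines_pb ih)

lemma ordCover_pb_le (π : Y → X) (δ : Finset (Set X)) :
    ordCover (pbCover π δ) ≤ ordCover δ := by
  apply Nat.sub_le_sub_right
  apply ciSup_le'
  intro y
  have h1 : ((pbCover π δ).filter fun B => y ∈ B).card ≤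
      (δ.filter fun A => π y ∈ A).card := by
    calc ((pbCover π δ).filter fun B => y ∈ B).card
        ≤ ((δ.filter fun A => π y ∈ A).image fun A => π ⁻¹' A).card := by
          apply Finset.card_le_card
          intro B hB
          simp only [pbCover, Finset.mem_filter, Finset.mem_image] at hB ⊢
          obtain ⟨⟨A, hA, rfl⟩, hy⟩ := hB
          exact ⟨A, ⟨hA, hy⟩, rfl⟩
      _ ≤ _ := Finset.card_image_le
  refine h1.trans ?_
  have hb : BddAbove (Set.range fun x : X => (δ.filter fun A => x ∈ A).card) := by
    refine ⟨δ.card, ?_⟩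
    rintro n ⟨x, rfl⟩
    exact Finset.card_filter_le _ _
  exact le_ciSup hb (π y)

lemma Dcover_pb_le [TopologicalSpace X] [TopologicalSpace Y] {π : Y → X}
    (hπ : Continuous π) {β : Finset (Set X)} (hβ : IsFinOpenCover β) :
    Dcover (pbCover π β) ≤ Dcover β := by
  obtain ⟨δ, hδ, href, hord⟩ := Nat.sInf_mem
    (⟨ordCover β, β, hβ, refines_refl β, rfl⟩ : Set.Nonempty
      {n | ∃ δ : Finset (Set X), IsFinOpenCover δ ∧ Refines δ β ∧ ordCover δ = n})
  calc Dcover (pbCover π β) ≤ ordCover (pbCover π δ) :=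
        Dcover_le_ord (isFinOpenCover_pb hπ hδ) (refines_pb href)
    _ ≤ ordCover δ := ordCover_pb_le π δ
    _ = Dcover β := hord

lemma mdimCover_mono [TopologicalSpace X] {T : X → X} (hT : Continuous T)
    {γ α : Finset (Set X)} (hγ : IsFinOpenCover γ) (h : Refines γ α) :
    mdimCover T α ≤ mdimCover T γ := by
  refine iInf_mono fun n => ?_
  gcongr
  exact_mod_cast Dcover_mono (isFinOpenCover_dyn hT hγ n) (refines_dyn h n)

lemma mdimCover_pb_le [TopologicalSpace X] [TopologicalSpace Y] {π : Y → X}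
    (hπ : Continuous π) {S : Y → Y} {T : X → X} (hT : Continuous T)
    (hsc : ∀ y, π (S y) = T (π y)) {β : Finset (Set X)} (hβ : IsFinOpenCover β) :
    mdimCover S (pbCover π β) ≤ mdimCover T β := by
  refine iInf_mono fun n => ?_
  gcongr
  rw [← pb_dyn hsc]
  exact_mod_cast Dcover_pb_le hπ (isFinOpenCover_dyn hT hβ n)

lemma Dcover_of_isEmpty [TopologicalSpace Y] [IsEmpty Y] (α : Finset (Set Y)) :
    Dcover α = 0 := by
  have h0 : (0 : ℕ) ∈ {n | ∃ β : Finset (Set Y), IsFinOpenCover β ∧ Refines β α ∧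
      ordCover β = n} := by
    refine ⟨∅, ⟨fun A hA => absurd hA (Finset.notMem_empty A), ?_⟩,
      fun B hB => absurd hB (Finset.notMem_empty B), ?_⟩
    · rw [Finset.coe_empty, Set.sUnion_empty]
      exact (Set.univ_eq_empty_iff.mpr inferInstance).symm
    · simp [ordCover, ciSup_of_empty]
  exact Nat.eq_zero_of_le_zero (Nat.sInf_le h0)

end AuxLemmas

section NatExtAux

variable {X : Type*} [TopologicalSpace X]

lemma natExt_iterate {T : X → X} {z : ℕ → X} (hz : z ∈ natExtSet T) (k m : ℕ) :
    z k = T^[m] (z (k + m)) := by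
  induction m with
  | zero => rfl
  | succ m ih =>
    show z k = T^[m + 1] (z ((k + m) + 1))
    rw [Function.iterate_succ_apply, hz (k + m), ← ih]

lemma natExt_semiconj (T : X → X) (N : ℕ) (z : ↥(natExtSet T)) :
    (natExtMap T z).1 N = T (z.1 N) := by
  cases N with
  | zero => rfl
  | succ m => exact (z.2 m).symm

lemma continuous_natExtMap {T : X → X} (hT : Continuous T) :
    Continuous (natExtMap T) := by
  apply Continuous.subtype_mk
  apply continuous_pi
  intro k
  cases k with
  | zero => exact hT.comp ((continuous_apply 0).comp continuous_subtype_val)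
  | succ k => exact (continuous_apply k).comp continuous_subtype_val

lemma isClosed_natExtSet [T2Space X] {T : X → X} (hT : Continuous T) :
    IsClosed (natExtSet T) := by
  have : natExtSet T = ⋂ k, {z : ℕ → X | T (z (k + 1)) = z k} := by
    ext z; simp [natExtSet, Set.mem_iInter]
  rw [this]
  exact isClosed_iInter fun k =>
    isClosed_eq (hT.comp (continuous_apply (k + 1))) (continuous_apply k)

lemma natExt_refine [CompactSpace X] [T2Space X] (T : X → X) (hT : Continuous T)
    (hne : Nonempty ↥(natExtSet T))
    {α : Finset (Set ↥(natExtSet T))} (hα : IsFinOpenCover α) :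
    ∃ (N : ℕ) (β : Finset (Set X)), IsFinOpenCover β ∧
      Refines (pbCover (fun z : ↥(natExtSet T) => z.1 N) β) α := by
  have stepA : ∀ y : ↥(natExtSet T), ∃ (M : ℕ) (V : Set X), IsOpen V ∧ y.1 M ∈ V ∧
      ∃ A ∈ α, ∀ z : ↥(natExtSet T), z.1 M ∈ V → z ∈ A := by
    intro y
    have hy : y ∈ ⋃₀ (α : Set (Set ↥(natExtSet T))) := hα.2 ▸ trivial
    obtain ⟨A, hA, hyA⟩ := hy
    obtain ⟨U, hU, hUA⟩ := isOpen_induced_iff.mp (hα.1 A hA)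
    have hyU : y.1 ∈ U := by rw [← hUA] at hyA; exact hyA
    obtain ⟨I, u, hu, hsub⟩ := isOpen_pi_iff.mp hU y.1 hyU
    set M := I.sup id with hM
    refine ⟨M, ⋂ i ∈ I, T^[M - i] ⁻¹' u i,
      isOpen_biInter_finset fun i hi => ((hu i hi).1).preimage (hT.iterate _), ?_, A, hA, ?_⟩
    · simp only [Set.mem_iInter, Set.mem_preimage]
      intro i hi
      have hiM : i ≤ M := Finset.le_sup (f := id) hi
      have hit := natExt_iterate y.2 i (M - i)
      rw [Nat.add_sub_cancel' hiM] at hit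
      rw [← hit]
      exact (hu i hi).2
    · intro z hz
      simp only [Set.mem_iInter, Set.mem_preimage] at hz
      have hzU : z.1 ∈ (I : Set ℕ).pi u := by
        intro i hi
        have hiF : i ∈ I := hi
        have hiM : i ≤ M := Finset.le_sup (f := id) hiF
        have hit := natExt_iterate z.2 i (M - i)
        rw [Nat.add_sub_cancel' hiM] at hit
        rw [hit]
        exact hz i hiF
      have := hsub hzU
      rw [← hUA]
      exact this
  choose M V hVopen hyV A hAα hVA using stepA
  haveI : CompactSpace ↥(natExtSet T) := isCompact_iff_compactSpace.mp ((isClosed_natExtSet hT).isCompact)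
  have hcov : (Set.univ : Set ↥(natExtSet T)) ⊆ ⋃ y : ↥(natExtSet T), (fun z : ↥(natExtSet T) => z.1 (M y)) ⁻¹' V y := fun z _ =>
    Set.mem_iUnion.mpr ⟨z, hyV z⟩
  obtain ⟨t, ht⟩ := isCompact_univ.elim_finite_subcover
    (fun y : ↥(natExtSet T) => (fun z : ↥(natExtSet T) => z.1 (M y)) ⁻¹' V y)
    (fun y => (hVopen y).preimage ((continuous_apply (M y)).comp continuous_subtype_val)) hcov
  set N := t.sup M with hN
  have hπN : Continuous fun z : ↥(natExtSet T) => z.1 N :=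
    (continuous_apply N).comp continuous_subtype_val
  set W : Set X := (Set.range fun z : ↥(natExtSet T) => z.1 N)ᶜ with hW
  refine ⟨N, (t.image fun y => T^[N - M y] ⁻¹' V y) ∪ {W}, ⟨?_, ?_⟩, ?_⟩
  · intro B hB
    simp only [Finset.mem_union, Finset.mem_image, Finset.mem_singleton] at hB
    rcases hB with ⟨y, _, rfl⟩ | rfl
    · exact (hVopen y).preimage (hT.iterate _)
    · exact (isCompact_range hπN).isClosed.isOpen_compl
  · ext x
    simp only [Set.mem_sUnion, Set.mem_univ, iff_true, Finset.mem_coe]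
    by_cases hx : x ∈ Set.range fun z : ↥(natExtSet T) => z.1 N
    · obtain ⟨z, rfl⟩ := hx
      have hz := ht (Set.mem_univ z)
      simp only [Set.mem_iUnion] at hz
      obtain ⟨y, hyt, hzy⟩ := hz
      have hMy : M y ≤ N := Finset.le_sup hyt
      have hit := natExt_iterate z.2 (M y) (N - M y)
      rw [Nat.add_sub_cancel' hMy] at hit
      refine ⟨T^[N - M y] ⁻¹' V y, ?_, ?_⟩
      · simp only [Finset.mem_union, Finset.mem_image]
        exact Or.inl ⟨y, hyt, rfl⟩
      · rw [Set.mem_preimage, ← hit]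
        exact hzy
    · refine ⟨W, ?_, hx⟩
      simp only [Finset.mem_union, Finset.mem_singleton]
      exact Or.inr trivial
  · intro B hB
    simp only [pbCover, Finset.mem_image, Finset.mem_union, Finset.mem_singleton] at hB
    obtain ⟨C, hC, rfl⟩ := hB
    rcases hC with ⟨y, hyt, rfl⟩ | rfl
    · refine ⟨A y, hAα y, ?_⟩
      intro z hz
      simp only [Set.mem_preimage] at hz
      have hMy : M y ≤ N := Finset.le_sup hyt
      have hit := natExt_iterate z.2 (M y) (N - M y)
      rw [Nat.add_sub_cancel' hMy] at hit
      exact hVA y z (by rw [hit]; exact hz)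
    · obtain ⟨z0⟩ := hne
      have hz0 : z0 ∈ ⋃₀ (α : Set (Set ↥(natExtSet T))) := hα.2 ▸ trivial
      obtain ⟨A0, hA0, _⟩ := hz0
      refine ⟨A0, hA0, ?_⟩
      intro z hz
      exact absurd ⟨z, rfl⟩ hz

end NatExtAux

/-- `mdim(X,T) ≥ mdim(X̃_T, T̃)` for the natural extension. -/
theorem mdim_natExt_le {X : Type*} [TopologicalSpace X] [CompactSpace X]
    [TopologicalSpace.MetrizableSpace X] (T : X → X) (hT : Continuous T) :
    mdim ↥(natExtSet T) (natExtMap T) ≤ mdim X T := by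
  rw [mdim]
  refine iSup₂_le fun αt hαt => ?_
  by_cases hne : Nonempty ↥(natExtSet T)
  · obtain ⟨N, β, hβ, href⟩ := natExt_refine T hT hne hαt
    have hπ : Continuous fun z : ↥(natExtSet T) => z.1 N :=
      (continuous_apply N).comp continuous_subtype_val
    calc mdimCover (natExtMap T) αt
        ≤ mdimCover (natExtMap T) (pbCover (fun z : ↥(natExtSet T) => z.1 N) β) :=
          mdimCover_mono (continuous_natExtMap hT) (isFinOpenCover_pb hπ hβ) href
      _ ≤ mdimCover T β := mdimCover_pb_le hπ hT (fun z => natExt_semiconj T N z) hβ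
      _ ≤ mdim X T := le_iSup₂_of_le β hβ le_rfl
  · haveI : IsEmpty ↥(natExtSet T) := not_nonempty_iff.mp hne
    refine le_trans (le_trans (iInf_le _ 0) ?_) zero_le
    simp [Dcover_of_isEmpty]
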